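/- Let K = (S¹)^m act on X = ∏_{i=1}^m S^{2n_i+1} ⊂ ∏_{i=1}^m ℂ^{n_i+1} by (g_1,...,g_m)·(z^i_0, z^i_1, ..., z^i_{n_i})_{i=1..m} = (g_i z^i_0, (∏_k g_k^{a^i_{k1}}) z^i_1, ..., (∏_k g_k^{a^i_{k n_i}}) z^i_{n_i})_{i=1..m}, where A = (a^i_{kj}) is the associated vector matrix. If all principal minors of A are ±1, then this action is free. -/

import Mathlib

open Finset

private lemma zpow_finsum {G : Type*} [CommGroup G] {ι : Type*} (s : Finset ι)
    (f : ι → ℤ) (u : G) : u ^ (∑ i ∈ s, f i) = ∏ i ∈ s, u ^ f i := by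
  classical
  induction s using Finset.induction with
  | empty => simp
  | insert _ _ h ih => simp [Finset.sum_insert h, Finset.prod_insert h, zpow_add, ih]

private lemma unimod_aux {G : Type*} [CommGroup G] {ι : Type*} [Fintype ι] [DecidableEq ι]
    (B C : Matrix ι ι ℤ) (hBC : B * C = 1) (u : ι → G)
    (h : ∀ i, ∏ k, u k ^ B k i = 1) : ∀ l, u l = 1 := by
  intro l
  have key : ∏ i, (∏ k, u k ^ B k i) ^ C i l = u l := by
    have : ∀ i, (∏ k, u k ^ B k i) ^ C i l = ∏ k, u k ^ (B k i * C i l) := by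
      intro i
      rw [← Finset.prod_zpow]
      exact Finset.prod_congr rfl fun k _ => by rw [← zpow_mul]
    simp_rw [this]
    rw [Finset.prod_comm]
    have : ∀ k, ∏ i, u k ^ (B k i * C i l) = u k ^ ((B * C) k l) := by
      intro k
      rw [Matrix.mul_apply, zpow_finsum]
    simp_rw [this, hBC]
    rw [Fintype.prod_eq_single l (fun k hk => by simp [Matrix.one_apply_ne hk])]
    simp [Matrix.one_apply_eq]
  rw [← key]
  simp [h]



/-- Lemma 4.3: the action of K = (S¹)^m on X = ∏ S^{2n_i+1} given by
(g·z)^i_0 = g_i z^i_0 and (g·z)^i_j = (∏_k g_k^{a^i_{kj}}) z^i_j (j ≥ 1)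
is free provided all principal minors of the vector matrix A = (a^i_k) are ±1.
Freeness: any g fixing some point z of X is the identity. -/
theorem stmt_18 (m : ℕ) (n : Fin m → ℕ) (hn : ∀ i, 1 ≤ n i)
    (a : Fin m → (i : Fin m) → Fin (n i) → ℤ)
    (hminor : ∀ (J : ∀ i : Fin m, Fin (n i)) (S : Finset (Fin m)), S.Nonempty →
      (Matrix.det (Matrix.of fun k i : {x // x ∈ S} =>
        a (k : Fin m) (i : Fin m) (J i)) = 1 ∨
       Matrix.det (Matrix.of fun k i : {x // x ∈ S} =>
        a (k : Fin m) (i : Fin m) (J i)) = -1))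
    (g : Fin m → ℂ) (hg : ∀ k, ‖g k‖ = 1)
    (z : (i : Fin m) → Fin (n i + 1) → ℂ)
    (hz : ∀ i, ∑ p, ‖z i p‖ ^ 2 = 1)
    (hfix0 : ∀ i : Fin m, g i * z i 0 = z i 0)
    (hfix : ∀ (i : Fin m) (j : Fin (n i)),
      (∏ k, g k ^ a k i j) * z i j.succ = z i j.succ) :
    ∀ k, g k = 1 := by
  classical
  have hg0 : ∀ k, g k ≠ 0 := by
    intro k h
    have := hg k
    rw [h] at this
    simp at this
  have hk1 : ∀ k, z k 0 ≠ 0 → g k = 1 := by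
    intro k h
    have := hfix0 k
    nth_rewrite 2 [← one_mul (z k 0)] at this
    exact mul_right_cancel₀ h this
  intro k0
  by_cases hk0 : z k0 0 = 0
  swap
  · exact hk1 k0 hk0
  set S : Finset (Fin m) := Finset.univ.filter (fun k => z k 0 = 0) with hSdef
  have hk0S : k0 ∈ S := by simp [hSdef, hk0]
  have hJex : ∀ i, z i 0 = 0 → ∃ j : Fin (n i), z i j.succ ≠ 0 := by
    intro i hi0
    by_contra h
    push_neg at h
    have hall : ∀ p, z i p = 0 := by
      intro p
      rcases Fin.eq_zero_or_eq_succ p with rfl | ⟨j, rfl⟩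
      · exact hi0
      · exact h j
    have h1 := hz i
    simp [hall] at h1
  set J : ∀ i : Fin m, Fin (n i) := fun i =>
    if h : ∃ j : Fin (n i), z i j.succ ≠ 0 then h.choose else ⟨0, hn i⟩ with hJdef
  have hJ : ∀ i ∈ S, z i (J i).succ ≠ 0 := by
    intro i hi
    have hi0 : z i 0 = 0 := by simpa [hSdef] using hi
    have hex := hJex i hi0
    simp only [hJdef, dif_pos hex]
    exact hex.choose_spec
  have key : ∀ i ∈ S, ∏ k ∈ S, g k ^ a k i (J i) = 1 := by
    intro i hi
    have h1 := hfix i (J i)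
    nth_rewrite 2 [← one_mul (z i (J i).succ)] at h1
    have huniv : ∏ k, g k ^ a k i (J i) = 1 := mul_right_cancel₀ (hJ i hi) h1
    have hsplit := Finset.prod_filter_mul_prod_filter_not Finset.univ
      (fun k => z k 0 = 0) (fun k => g k ^ a k i (J i))
    have hnot : ∏ k ∈ Finset.univ.filter (fun k => ¬ z k 0 = 0),
        g k ^ a k i (J i) = 1 := by
      apply Finset.prod_eq_one
      intro k hk
      have : z k 0 ≠ 0 := by simpa using hk
      rw [hk1 k this, one_zpow]
    rw [huniv] at hsplit
    rw [← hSdef] at hsplit  -- maybe unnecessary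
    rw [hnot, mul_one] at hsplit
    exact hsplit
  -- units
  set u : {x // x ∈ S} → ℂˣ := fun k => Units.mk0 (g k) (hg0 k) with hudef
  set B : Matrix {x // x ∈ S} {x // x ∈ S} ℤ :=
    Matrix.of fun k i : {x // x ∈ S} => a (k : Fin m) (i : Fin m) (J i) with hBdef
  have hBcol : ∀ i : {x // x ∈ S}, ∏ k, u k ^ B k i = 1 := by
    intro i
    apply Units.ext
    have : ((∏ k, u k ^ B k i : ℂˣ) : ℂ) = ∏ k : {x // x ∈ S}, g k ^ B k i := by
      push_cast
      rfl
    rw [this]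
    have h2 : ∏ k : {x // x ∈ S}, g (k : Fin m) ^ a (k : Fin m) i.1 (J i.1)
        = ∏ k ∈ S, g k ^ a k i.1 (J i.1) :=
      Finset.prod_coe_sort S (fun x => g x ^ a x i.1 (J i.1))
    rw [show (∏ k : {x // x ∈ S}, g (k : Fin m) ^ B k i)
        = ∏ k : {x // x ∈ S}, g (k : Fin m) ^ a (k : Fin m) i.1 (J i.1) from rfl,
      h2, key i.1 i.2]
    rfl
  have hdet := hminor J S ⟨k0, hk0S⟩
  have hdetU : IsUnit B.det := by
    rcases hdet with h | h
    · rw [hBdef]; rw [h]; exact isUnit_one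
    · rw [hBdef]; rw [h]; exact isUnit_one.neg
  have hBU : IsUnit B := (Matrix.isUnit_iff_isUnit_det B).mpr hdetU
  obtain ⟨C, hC⟩ := hBU.exists_right_inv
  have := unimod_aux B C hC u hBcol ⟨k0, hk0S⟩
  have := congrArg (Units.val) this
  simpa [hudef] using this
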